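/- Let q be a polynomial of degree (n,m) with no zeros on the closed bidisk, q(0,0) > 0, and let μ be its Bernstein–Szegő probability measure with normalizing constant c. Then q/c is, up to a unimodular constant, the unique polynomial p of bidegree (n,m) satisfying: p ⊥_μ z^j w^k for all 0 ≤ j ≤ n, 0 ≤ k ≤ m with (j,k) ≠ (0,0), p(0,0) > 0, and ‖p‖_μ = 1; equivalently, the reproducing kernel of the one-dimensional μ-orthogonal complement of span{z^j w^k : (j,k) ≠ (0,0), 0 ≤ j ≤ n, 0 ≤ k ≤ m} inside the degree-(n,m) polynomials is (1/c^2) q(z,w) conj(q(ζ,ω)). -/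

import Mathlib

open ComplexConjugate

/-- Evaluation of a two-variable polynomial of bidegree at most `(n, m)`. -/
noncomputable def evalP (n m : ℕ) (a : ℕ → ℕ → ℂ) (z w : ℂ) : ℂ :=
  ∑ j ∈ Finset.range (n + 1), ∑ k ∈ Finset.range (m + 1), a j k * z ^ j * w ^ k

/-- Point on the unit circle. -/
noncomputable def tor (θ : ℝ) : ℂ := Complex.exp (θ * Complex.I)

/-- `p` (given by coefficients `b`) is `μ`-orthogonal to every monomial `z^j w^k` with
`0 ≤ j ≤ n`, `0 ≤ k ≤ m`, `(j,k) ≠ (0,0)`, where `μ` is the Bernstein–Szegő measure of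
`q` (given by coefficients `a`) with normalizing constant `c`. -/
def OrthCond (n m : ℕ) (a b : ℕ → ℕ → ℂ) (c : ℝ) : Prop :=
  ∀ j k : ℕ, j ≤ n → k ≤ m → (j, k) ≠ (0, 0) →
    (1 / (2 * Real.pi) ^ 2 : ℂ) *
      (∫ θ in (0 : ℝ)..(2 * Real.pi), ∫ φ in (0 : ℝ)..(2 * Real.pi),
        evalP n m b (tor θ) (tor φ) * conj ((tor θ) ^ j * (tor φ) ^ k) *
          ((c : ℂ) ^ 2 / (‖evalP n m a (tor θ) (tor φ)‖ : ℂ) ^ 2)) = 0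

/-- `p` (given by coefficients `b`) has unit norm in `L²(μ)`, where `μ` is the
Bernstein–Szegő measure of `q` with normalizing constant `c`. -/
def NormOneCond (n m : ℕ) (a b : ℕ → ℕ → ℂ) (c : ℝ) : Prop :=
  (1 / (2 * Real.pi) ^ 2) *
    (∫ θ in (0 : ℝ)..(2 * Real.pi), ∫ φ in (0 : ℝ)..(2 * Real.pi),
      ‖evalP n m b (tor θ) (tor φ)‖ ^ 2 *
        (c ^ 2 / ‖evalP n m a (tor θ) (tor φ)‖ ^ 2)) = 1

/-- `p(0,0)` is a positive real number. -/
def PosAtZero (n m : ℕ) (b : ℕ → ℕ → ℂ) : Prop :=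
  0 < (evalP n m b 0 0).re ∧ (evalP n m b 0 0).im = 0

namespace BS


open MeasureTheory Metric Complex Finset intervalIntegral
open scoped Real

lemma cont_tor : Continuous tor := by
  unfold tor; fun_prop

lemma abs_tor (θ : ℝ) : ‖tor θ‖ = 1 := by
  simp [tor, Complex.norm_exp]

lemma tor_circleMap (θ : ℝ) : circleMap 0 1 θ = tor θ := by
  simp [circleMap, tor]

lemma evalP_cont (n m : ℕ) (b : ℕ → ℕ → ℂ) :
    Continuous fun p : ℂ × ℂ => evalP n m b p.1 p.2 := by
  unfold evalP
  exact continuous_finset_sum _ fun j _ => continuous_finset_sum _ fun k _ => by fun_prop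

lemma evalP_diff_w (n m : ℕ) (b : ℕ → ℕ → ℂ) (z : ℂ) :
    Differentiable ℂ fun w => evalP n m b z w := by
  unfold evalP
  apply Differentiable.fun_sum; intro j _
  apply Differentiable.fun_sum; intro k _
  exact (differentiable_pow k).const_mul _

lemma evalP_diff_z (n m : ℕ) (b : ℕ → ℕ → ℂ) (w : ℂ) :
    Differentiable ℂ fun z => evalP n m b z w := by
  unfold evalP
  apply Differentiable.fun_sum; intro j _
  apply Differentiable.fun_sum; intro k _
  exact ((differentiable_pow j).const_mul _).mul_const _

lemma evalP_zero (n m : ℕ) (b : ℕ → ℕ → ℂ) : evalP n m b 0 0 = b 0 0 := by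
  unfold evalP
  rw [Finset.sum_eq_single 0]
  · rw [Finset.sum_eq_single 0]
    · simp
    · intro k _ hk; simp [zero_pow hk]
    · intro h; exact absurd (Finset.mem_range.2 (Nat.succ_pos m)) h
  · intro j _ hj; simp [zero_pow hj]
  · intro h; exact absurd (Finset.mem_range.2 (Nat.succ_pos n)) h

lemma absSq (z : ℂ) : ((‖z‖ : ℝ) : ℂ) ^ 2 = z * conj z := by
  rw [← Complex.ofReal_pow, Complex.sq_norm, Complex.mul_conj]


lemma circle_mean_value {f : ℂ → ℂ} (hf : DifferentiableOn ℂ f (closedBall 0 1)) :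
    ∫ θ in (0:ℝ)..(2*π), f (tor θ) = 2 * π * f 0 := by
  have h1 : DiffContOnCl ℂ f (ball (0:ℂ) 1) := by
    apply DifferentiableOn.diffContOnCl
    rwa [closure_ball (0:ℂ) one_ne_zero]
  have h2 := h1.two_pi_i_inv_smul_circleIntegral_sub_inv_smul (mem_ball_self one_pos)
  rw [circleIntegral] at h2
  have key : (∫ θ in (0:ℝ)..(2*π), deriv (circleMap 0 1) θ • ((circleMap 0 1 θ - 0)⁻¹ • f (circleMap 0 1 θ)))
      = Complex.I * ∫ θ in (0:ℝ)..(2*π), f (tor θ) := by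
    rw [← intervalIntegral.integral_const_mul]
    apply intervalIntegral.integral_congr
    intro θ _
    have hne : circleMap 0 1 θ ≠ 0 := circleMap_ne_center one_ne_zero
    simp only [deriv_circleMap, smul_eq_mul, sub_zero, tor_circleMap]
    rw [← tor_circleMap]
    field_simp
  rw [key, smul_eq_mul] at h2
  have hpi : (2 * (π:ℂ) * Complex.I) ≠ 0 := by
    simp [Real.pi_ne_zero, Complex.I_ne_zero, Complex.ofReal_ne_zero]
  rw [inv_mul_eq_iff_eq_mul₀ hpi] at h2
  have h3 : Complex.I * ∫ θ in (0:ℝ)..(2*π), f (tor θ) = Complex.I * (2 * π * f 0) := by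
    rw [h2]; ring
  exact mul_left_cancel₀ Complex.I_ne_zero h3


lemma double_mean_value (n m : ℕ) (a : ℕ → ℕ → ℂ)
    (hstable : ∀ z w : ℂ, ‖z‖ ≤ 1 → ‖w‖ ≤ 1 → evalP n m a z w ≠ 0)
    {P : ℂ → ℂ → ℂ}
    (hPw : ∀ z, Differentiable ℂ (P z))
    (hPz : Differentiable ℂ (fun z => P z 0)) :
    (∫ θ in (0:ℝ)..(2*π), ∫ φ in (0:ℝ)..(2*π),
      P (tor θ) (tor φ) / evalP n m a (tor θ) (tor φ))
      = (2*π)^2 * (P 0 0 / evalP n m a 0 0) := by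
  have habs : ∀ θ:ℝ, ‖tor θ‖ ≤ 1 := fun θ => le_of_eq (abs_tor θ)
  have hinner : ∀ θ:ℝ, (∫ φ in (0:ℝ)..(2*π), P (tor θ) (tor φ) / evalP n m a (tor θ) (tor φ))
      = 2*π * (P (tor θ) 0 / evalP n m a (tor θ) 0) := by
    intro θ
    exact circle_mean_value (f := fun w => P (tor θ) w / evalP n m a (tor θ) w)
      (((hPw _).differentiableOn).div ((evalP_diff_w n m a _).differentiableOn)
        (fun w hw => hstable _ _ (habs θ) (by rwa [← mem_closedBall_zero_iff])))
  rw [intervalIntegral.integral_congr (fun θ _ => hinner θ)]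
  rw [intervalIntegral.integral_const_mul]
  rw [circle_mean_value (f := fun z => P z 0 / evalP n m a z 0)
    ((hPz.differentiableOn).div ((evalP_diff_z n m a 0).differentiableOn)
      (fun z hz => hstable _ _ (by rwa [← mem_closedBall_zero_iff]) (by simp)))]
  ring

noncomputable def tint (F : ℝ → ℝ → ℂ) : ℂ :=
  ∫ θ in (0:ℝ)..(2*π), ∫ φ in (0:ℝ)..(2*π), F θ φ

lemma tint_congr {F G : ℝ → ℝ → ℂ} (h : ∀ θ φ, F θ φ = G θ φ) : tint F = tint G := by
  unfold tint; simp only [h]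

lemma intervalIntegral_conj (f : ℝ → ℂ) (a b : ℝ) :
    (∫ x in a..b, conj (f x)) = conj (∫ x in a..b, f x) := by
  unfold intervalIntegral
  rw [integral_conj, integral_conj, ← map_sub]

lemma tint_conj (F : ℝ → ℝ → ℂ) : tint (fun θ φ => conj (F θ φ)) = conj (tint F) := by
  unfold tint
  simp only [intervalIntegral_conj]

lemma tint_ofReal (F : ℝ → ℝ → ℝ) :
    tint (fun θ φ => ((F θ φ : ℝ) : ℂ))
      = ((∫ θ in (0:ℝ)..(2*π), ∫ φ in (0:ℝ)..(2*π), F θ φ : ℝ) : ℂ) := by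
  unfold tint
  simp only [intervalIntegral.integral_ofReal]

lemma tint_sum {ι : Type*} (s : Finset ι) (H : ι → ℝ → ℝ → ℂ)
    (hH : ∀ i ∈ s, Continuous fun p : ℝ × ℝ => H i p.1 p.2) :
    tint (fun θ φ => ∑ i ∈ s, H i θ φ) = ∑ i ∈ s, tint (H i) := by
  unfold tint
  have h1 : ∀ θ:ℝ, (∫ φ in (0:ℝ)..(2*π), ∑ i ∈ s, H i θ φ)
      = ∑ i ∈ s, ∫ φ in (0:ℝ)..(2*π), H i θ φ := by
    intro θ
    apply intervalIntegral.integral_finset_sum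
    intro i hi
    exact ((hH i hi).uncurry_left θ).intervalIntegrable _ _
  rw [intervalIntegral.integral_congr (fun θ _ => h1 θ)]
  apply intervalIntegral.integral_finset_sum
  intro i hi
  exact (intervalIntegral.continuous_parametric_intervalIntegral_of_continuous'
    (hH i hi) _ _).intervalIntegrable _ _

lemma tint_const_mul (d : ℂ) (F : ℝ → ℝ → ℂ) :
    tint (fun θ φ => d * F θ φ) = d * tint F := by
  unfold tint; simp only [intervalIntegral.integral_const_mul]

lemma tint_sub (F G : ℝ → ℝ → ℂ) (hF : Continuous fun p : ℝ × ℝ => F p.1 p.2)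
    (hG : Continuous fun p : ℝ × ℝ => G p.1 p.2) :
    tint (fun θ φ => F θ φ - G θ φ) = tint F - tint G := by
  unfold tint
  have h1 : ∀ θ:ℝ, (∫ φ in (0:ℝ)..(2*π), (F θ φ - G θ φ))
      = (∫ φ in (0:ℝ)..(2*π), F θ φ) - ∫ φ in (0:ℝ)..(2*π), G θ φ := by
    intro θ
    exact intervalIntegral.integral_sub ((hF.uncurry_left θ).intervalIntegrable _ _)
      ((hG.uncurry_left θ).intervalIntegrable _ _)
  rw [intervalIntegral.integral_congr (fun θ _ => h1 θ)]
  exact intervalIntegral.integral_sub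
    ((intervalIntegral.continuous_parametric_intervalIntegral_of_continuous'
      hF _ _).intervalIntegrable _ _)
    ((intervalIntegral.continuous_parametric_intervalIntegral_of_continuous'
      hG _ _).intervalIntegrable _ _)

lemma tint_const (d : ℂ) : tint (fun _ _ => d) = ((2*π:ℝ)^2 : ℝ) * d := by
  unfold tint
  simp only [intervalIntegral.integral_const, sub_zero, smul_smul]
  rw [Complex.real_smul]
  push_cast
  ring

lemma tor_pow_int (j k : ℕ) (θ : ℝ) :
    (tor θ)^j * conj ((tor θ)^k) = Complex.exp ((((j:ℂ) - k) * Complex.I) * θ) := by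
  unfold tor
  rw [← Complex.exp_nat_mul, ← Complex.exp_nat_mul, ← Complex.exp_conj, ← Complex.exp_add]
  congr 1
  simp only [map_mul, Complex.conj_ofReal, Complex.conj_I, map_natCast]
  ring

lemma char_integral (j k : ℕ) :
    (∫ θ in (0:ℝ)..(2*π), (tor θ)^j * conj ((tor θ)^k))
      = if j = k then ((2*π:ℝ):ℂ) else 0 := by
  rw [intervalIntegral.integral_congr (fun θ _ => tor_pow_int j k θ)]
  by_cases h : j = k
  · subst h
    rw [if_pos rfl]
    simp only [sub_self, zero_mul, Complex.exp_zero]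
    simp
  · rw [if_neg h]
    have hc : ((j:ℂ) - k) * Complex.I ≠ 0 := by
      apply mul_ne_zero _ Complex.I_ne_zero
      rw [sub_ne_zero]
      exact_mod_cast h
    rw [integral_exp_mul_complex hc]
    have h2 : (((j:ℂ) - k) * Complex.I) * ((2*π:ℝ):ℂ)
        = ((((j:ℤ) - (k:ℤ) : ℤ)):ℂ) * (2*(π:ℂ)*Complex.I) := by
      push_cast; ring
    rw [h2, Complex.exp_int_mul_two_pi_mul_I]
    simp

lemma zero_of_nonneg (g : ℝ → ℝ) (hg : Continuous g) (h0 : ∀ x, 0 ≤ g x)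
    (hi : (∫ x in (0:ℝ)..(2*π), g x) = 0) : ∀ x ∈ Set.Icc (0:ℝ) (2*π), g x = 0 := by
  have hInt : IntervalIntegrable g MeasureTheory.volume 0 (2*π) :=
    hg.intervalIntegrable _ _
  have hsupp : MeasureTheory.volume (Function.support g ∩ Set.Ioc 0 (2*π)) = 0 := by
    by_contra hpos
    have h2 : 0 < ∫ x in (0:ℝ)..(2*π), g x := by
      rw [intervalIntegral.integral_pos_iff_support_of_nonneg_ae
        (Filter.Eventually.of_forall h0) hInt]
      exact ⟨Real.two_pi_pos, pos_iff_ne_zero.mpr hpos⟩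
    rw [hi] at h2; exact lt_irrefl _ h2
  intro x hx
  by_contra hne
  have hxpos : 0 < g x := lt_of_le_of_ne (h0 x) (Ne.symm hne)
  have hopen : IsOpen {y | 0 < g y} := isOpen_lt continuous_const hg
  obtain ⟨ε, hε, hball⟩ := Metric.isOpen_iff.1 hopen x hxpos
  have hAB : max 0 (x - ε) < min (2*π) (x + ε) := by
    apply max_lt
    · exact lt_min Real.two_pi_pos (by linarith [hx.1])
    · exact lt_min (by linarith [hx.2]) (by linarith)
  have hsub : Set.Ioo (max 0 (x - ε)) (min (2*π) (x + ε))
      ⊆ Function.support g ∩ Set.Ioc 0 (2*π) := by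
    intro y hy
    constructor
    · have hyb : y ∈ Metric.ball x ε := by
        rw [Real.ball_eq_Ioo]
        exact ⟨lt_of_le_of_lt (le_max_right 0 (x - ε)) hy.1,
          lt_of_lt_of_le hy.2 (min_le_right _ _)⟩
      exact ne_of_gt (hball hyb)
    · exact ⟨lt_of_le_of_lt (le_max_left 0 _) hy.1,
        le_trans hy.2.le (min_le_left _ _)⟩
  have hv : MeasureTheory.volume (Set.Ioo (max 0 (x - ε)) (min (2*π) (x + ε))) = 0 :=
    le_antisymm (hsupp ▸ MeasureTheory.measure_mono hsub) zero_le
  rw [Real.volume_Ioo] at hv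
  have := ENNReal.ofReal_eq_zero.mp hv
  linarith

lemma evalP_div (n m : ℕ) (a : ℕ → ℕ → ℂ) (d : ℂ) (z w : ℂ) :
    evalP n m (fun j k => a j k / d) z w = evalP n m a z w / d := by
  unfold evalP
  rw [Finset.sum_div]
  refine Finset.sum_congr rfl fun j _ => ?_
  rw [Finset.sum_div]
  refine Finset.sum_congr rfl fun k _ => ?_
  ring

lemma evalP_sub (n m : ℕ) (f g : ℕ → ℕ → ℂ) (z w : ℂ) :
    evalP n m (fun j k => f j k - g j k) z w = evalP n m f z w - evalP n m g z w := by
  unfold evalP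
  rw [← Finset.sum_sub_distrib]
  refine Finset.sum_congr rfl fun j _ => ?_
  rw [← Finset.sum_sub_distrib]
  refine Finset.sum_congr rfl fun k _ => ?_
  ring

lemma evalP_const_mul (n m : ℕ) (f : ℕ → ℕ → ℂ) (d z w : ℂ) :
    evalP n m (fun j k => d * f j k) z w = d * evalP n m f z w := by
  unfold evalP
  rw [Finset.mul_sum]
  refine Finset.sum_congr rfl fun j _ => ?_
  rw [Finset.mul_sum]
  refine Finset.sum_congr rfl fun k _ => ?_
  ring

lemma alg1 (Q M : ℂ) (c : ℝ) (hQ : Q ≠ 0) (hc : c ≠ 0) :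
    (Q / c) * conj M * ((c:ℂ)^2 / ((‖Q‖ : ℝ):ℂ)^2) = conj ((c:ℂ) * M / Q) := by
  rw [absSq, map_div₀, map_mul, Complex.conj_ofReal]
  have hQc : conj Q ≠ 0 := by simpa using hQ
  have hcC : (c:ℂ) ≠ 0 := Complex.ofReal_ne_zero.mpr hc
  field_simp

lemma tint_sep (u v : ℝ → ℂ) :
    tint (fun θ φ => u θ * v φ)
      = (∫ θ in (0:ℝ)..(2*π), u θ) * (∫ φ in (0:ℝ)..(2*π), v φ) := by
  unfold tint
  simp only [intervalIntegral.integral_const_mul]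
  rw [intervalIntegral.integral_mul_const]

lemma contP2 (n m : ℕ) (b : ℕ → ℕ → ℂ) :
    Continuous fun p : ℝ × ℝ => evalP n m b (tor p.1) (tor p.2) := by
  unfold evalP
  exact continuous_finset_sum _ fun j _ => continuous_finset_sum _ fun k _ =>
    (continuous_const.mul ((cont_tor.comp continuous_fst).pow j)).mul
      ((cont_tor.comp continuous_snd).pow k)

lemma contM (j k : ℕ) :
    Continuous fun p : ℝ × ℝ => conj ((tor p.1)^j * (tor p.2)^k) :=
  Complex.continuous_conj.comp
    (((cont_tor.comp continuous_fst).pow j).mul ((cont_tor.comp continuous_snd).pow k))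

lemma unique (n m : ℕ) (a : ℕ → ℕ → ℂ)
    (hstable : ∀ z w : ℂ, ‖z‖ ≤ 1 → ‖w‖ ≤ 1 → evalP n m a z w ≠ 0)
    (hpos : PosAtZero n m a) (c : ℝ) (hc : 0 < c)
    (horthA : ∀ j k : ℕ, j ≤ n → k ≤ m → (j, k) ≠ (0, 0) →
      tint (fun θ φ => evalP n m (fun j k => a j k / (c:ℂ)) (tor θ) (tor φ) *
        conj ((tor θ)^j * (tor φ)^k) *
        ((c:ℂ)^2 / ((‖evalP n m a (tor θ) (tor φ)‖ : ℝ):ℂ)^2)) = 0)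
    (b : ℕ → ℕ → ℂ) (hOrthb : OrthCond n m a b c) (hPosb : PosAtZero n m b)
    (hNormb : NormOneCond n m a b c) :
    ∀ z w : ℂ, evalP n m b z w = evalP n m a z w / (c:ℂ) := by
  have hQne : ∀ θ φ : ℝ, evalP n m a (tor θ) (tor φ) ≠ 0 :=
    fun θ φ => hstable _ _ (le_of_eq (abs_tor θ)) (le_of_eq (abs_tor φ))
  have habsne : ∀ θ φ : ℝ, ‖evalP n m a (tor θ) (tor φ)‖ ≠ 0 :=
    fun θ φ => norm_ne_zero_iff.mpr (hQne θ φ)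
  have hcC : (c:ℂ) ≠ 0 := Complex.ofReal_ne_zero.mpr hc.ne'
  have hpi2 : (1 / (2 * Real.pi) ^ 2 : ℂ) ≠ 0 := by
    apply one_div_ne_zero; apply pow_ne_zero
    simp [Real.pi_ne_zero]
  have hqa : evalP n m a 0 0 = ((evalP n m a 0 0).re : ℂ) := by
    rw [Complex.ext_iff]; exact ⟨by simp, by simp [hpos.2]⟩
  have hpb : evalP n m b 0 0 = ((evalP n m b 0 0).re : ℂ) := by
    rw [Complex.ext_iff]; exact ⟨by simp, by simp [hPosb.2]⟩
  set br := (evalP n m b 0 0).re with hbr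
  set ar := (evalP n m a 0 0).re with har
  set lam := c * br / ar with hlam
  have hlampos : 0 < lam := div_pos (mul_pos hc hPosb.1) hpos.1
  set s' : ℕ → ℕ → ℂ := fun j k => b j k - (lam:ℂ) * (a j k / (c:ℂ)) with hs'
  have hSlin : ∀ z w : ℂ, evalP n m s' z w
      = evalP n m b z w - (lam:ℂ) * evalP n m (fun j k => a j k / (c:ℂ)) z w := by
    intro z w
    unfold evalP
    rw [Finset.mul_sum, ← Finset.sum_sub_distrib]
    refine Finset.sum_congr rfl fun j _ => ?_
    rw [Finset.mul_sum, ← Finset.sum_sub_distrib]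
    refine Finset.sum_congr rfl fun k _ => ?_
    simp only [hs']
    ring
  have hs00 : s' 0 0 = 0 := by
    have hb00 : b 0 0 = (br:ℂ) := by rw [← evalP_zero n m b]; exact hpb
    have ha00 : a 0 0 = (ar:ℂ) := by rw [← evalP_zero n m a]; exact hqa
    have harC : (ar:ℂ) ≠ 0 := Complex.ofReal_ne_zero.mpr hpos.1.ne'
    simp only [hs']
    rw [hb00, ha00, hlam]
    push_cast
    field_simp
    ring
  have contDens : Continuous fun p : ℝ × ℝ =>
      (c:ℂ)^2 / ((‖evalP n m a (tor p.1) (tor p.2)‖ : ℝ):ℂ)^2 := by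
    apply continuous_const.div
    · exact (Complex.continuous_ofReal.comp (continuous_norm.comp (contP2 n m a))).pow 2
    · intro p
      exact pow_ne_zero _ (Complex.ofReal_ne_zero.mpr (habsne _ _))
  have contX : ∀ (f : ℕ → ℕ → ℂ) (j k : ℕ), Continuous fun p : ℝ × ℝ =>
      evalP n m f (tor p.1) (tor p.2) * conj ((tor p.1)^j * (tor p.2)^k) *
        ((c:ℂ)^2 / ((‖evalP n m a (tor p.1) (tor p.2)‖ : ℝ):ℂ)^2) :=
    fun f j k => ((contP2 n m f).mul (contM j k)).mul contDens
  have hSorth : ∀ j k : ℕ, j ≤ n → k ≤ m → (j, k) ≠ (0, 0) →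
      tint (fun θ φ => evalP n m s' (tor θ) (tor φ) * conj ((tor θ)^j * (tor φ)^k) *
        ((c:ℂ)^2 / ((‖evalP n m a (tor θ) (tor φ)‖ : ℝ):ℂ)^2)) = 0 := by
    intro j k hj hk hjk
    have hXb' : tint (fun θ φ => evalP n m b (tor θ) (tor φ) * conj ((tor θ)^j * (tor φ)^k) *
        ((c:ℂ)^2 / ((‖evalP n m a (tor θ) (tor φ)‖ : ℝ):ℂ)^2)) = 0 := by
      rcases mul_eq_zero.mp (hOrthb j k hj hk hjk) with h | h
      · exact absurd h hpi2
      · exact h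
    have hYA := horthA j k hj hk hjk
    have hcongr : tint (fun θ φ => evalP n m s' (tor θ) (tor φ) * conj ((tor θ)^j * (tor φ)^k) *
          ((c:ℂ)^2 / ((‖evalP n m a (tor θ) (tor φ)‖ : ℝ):ℂ)^2))
        = tint (fun θ φ =>
            (evalP n m b (tor θ) (tor φ) * conj ((tor θ)^j * (tor φ)^k) *
              ((c:ℂ)^2 / ((‖evalP n m a (tor θ) (tor φ)‖ : ℝ):ℂ)^2))
            - (lam:ℂ) * (evalP n m (fun j k => a j k / (c:ℂ)) (tor θ) (tor φ) *
              conj ((tor θ)^j * (tor φ)^k) *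
              ((c:ℂ)^2 / ((‖evalP n m a (tor θ) (tor φ)‖ : ℝ):ℂ)^2))) :=
      tint_congr (fun θ φ => by rw [hSlin]; ring)
    rw [hcongr, tint_sub _ _ (contX b j k)
      (continuous_const.mul (contX (fun j k => a j k / (c:ℂ)) j k)), tint_const_mul,
      hXb', hYA]
    simp
  have hconjS : ∀ z w : ℂ, conj (evalP n m s' z w)
      = ∑ j ∈ Finset.range (n+1), ∑ k ∈ Finset.range (m+1), conj (s' j k) * conj (z^j * w^k) := by
    intro z w
    unfold evalP
    rw [map_sum]
    refine Finset.sum_congr rfl fun j _ => ?_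
    rw [map_sum]
    refine Finset.sum_congr rfl fun k _ => ?_
    simp only [map_mul]
    ring
  have hss : tint (fun θ φ => evalP n m s' (tor θ) (tor φ) * conj (evalP n m s' (tor θ) (tor φ)) *
      ((c:ℂ)^2 / ((‖evalP n m a (tor θ) (tor φ)‖ : ℝ):ℂ)^2)) = 0 := by
    have hpt : ∀ θ φ : ℝ, evalP n m s' (tor θ) (tor φ) * conj (evalP n m s' (tor θ) (tor φ)) *
        ((c:ℂ)^2 / ((‖evalP n m a (tor θ) (tor φ)‖ : ℝ):ℂ)^2)
        = ∑ j ∈ Finset.range (n+1), ∑ k ∈ Finset.range (m+1),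
            conj (s' j k) * (evalP n m s' (tor θ) (tor φ) * conj ((tor θ)^j * (tor φ)^k) *
              ((c:ℂ)^2 / ((‖evalP n m a (tor θ) (tor φ)‖ : ℝ):ℂ)^2)) := by
      intro θ φ
      rw [hconjS (tor θ) (tor φ), Finset.mul_sum, Finset.sum_mul]
      refine Finset.sum_congr rfl fun j _ => ?_
      rw [Finset.mul_sum, Finset.sum_mul]
      refine Finset.sum_congr rfl fun k _ => ?_
      ring
    rw [tint_congr hpt,
      tint_sum _ _ (fun j _ => continuous_finset_sum _ fun k _ =>
        continuous_const.mul (contX s' j k))]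
    apply Finset.sum_eq_zero; intro j hj
    rw [tint_sum _ _ (fun k _ => continuous_const.mul (contX s' j k))]
    apply Finset.sum_eq_zero; intro k hk
    rw [tint_const_mul]
    by_cases h0 : j = 0 ∧ k = 0
    · rw [h0.1, h0.2, hs00]; simp
    · rw [hSorth j k (Nat.lt_succ_iff.mp (Finset.mem_range.mp hj))
        (Nat.lt_succ_iff.mp (Finset.mem_range.mp hk)) (by simpa [Prod.ext_iff] using h0)]
      simp
  -- pointwise vanishing on the torus
  have hrealzero : ∀ θ ∈ Set.Icc (0:ℝ) (2*Real.pi), ∀ φ ∈ Set.Icc (0:ℝ) (2*Real.pi),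
      evalP n m s' (tor θ) (tor φ) = 0 := by
    have hgRnn : ∀ θ φ : ℝ, 0 ≤ Complex.normSq (evalP n m s' (tor θ) (tor φ)) *
        (c^2 / (‖evalP n m a (tor θ) (tor φ)‖)^2) :=
      fun θ φ => mul_nonneg (Complex.normSq_nonneg _) (by positivity)
    have hgRcont : Continuous fun p : ℝ × ℝ => Complex.normSq (evalP n m s' (tor p.1) (tor p.2)) *
        (c^2 / (‖evalP n m a (tor p.1) (tor p.2)‖)^2) := by
      apply Continuous.mul
      · exact Complex.continuous_normSq.comp (contP2 n m s')
      · exact continuous_const.div ((continuous_norm.comp (contP2 n m a)).pow 2)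
          (fun p => pow_ne_zero _ (habsne _ _))
    have h1 : tint (fun θ φ => ((Complex.normSq (evalP n m s' (tor θ) (tor φ)) *
        (c^2 / (‖evalP n m a (tor θ) (tor φ)‖)^2) : ℝ) : ℂ)) = 0 := by
      rw [← hss]
      apply tint_congr
      intro θ φ
      push_cast
      rw [← Complex.mul_conj]
    rw [tint_ofReal] at h1
    have hint : (∫ θ in (0:ℝ)..(2*Real.pi), ∫ φ in (0:ℝ)..(2*Real.pi),
        Complex.normSq (evalP n m s' (tor θ) (tor φ)) *
          (c^2 / (‖evalP n m a (tor θ) (tor φ)‖)^2)) = 0 :=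
      Complex.ofReal_eq_zero.mp h1
    have hG : ∀ θ ∈ Set.Icc (0:ℝ) (2*Real.pi),
        (∫ φ in (0:ℝ)..(2*Real.pi), Complex.normSq (evalP n m s' (tor θ) (tor φ)) *
          (c^2 / (‖evalP n m a (tor θ) (tor φ)‖)^2)) = 0 := by
      apply zero_of_nonneg
      · exact intervalIntegral.continuous_parametric_intervalIntegral_of_continuous'
          (f := fun θ φ => Complex.normSq (evalP n m s' (tor θ) (tor φ)) *
            (c^2 / (‖evalP n m a (tor θ) (tor φ)‖)^2)) hgRcont _ _
      · intro θ
        exact intervalIntegral.integral_nonneg Real.two_pi_pos.le (fun φ _ => hgRnn θ φ)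
      · exact hint
    intro θ hθ φ hφ
    have h2 := zero_of_nonneg _ (Continuous.uncurry_left (f := fun θ φ =>
      Complex.normSq (evalP n m s' (tor θ) (tor φ)) *
        (c^2 / (‖evalP n m a (tor θ) (tor φ)‖)^2)) θ hgRcont) (hgRnn θ) (hG θ hθ) φ hφ
    have hpos2 : 0 < c^2 / (‖evalP n m a (tor θ) (tor φ)‖)^2 :=
      div_pos (by positivity) (pow_pos (norm_pos_iff.mpr (hQne θ φ)) 2)
    rcases mul_eq_zero.mp h2 with h | h
    · exact Complex.normSq_eq_zero.mp h
    · exact absurd h hpos2.ne'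
  -- Fourier coefficients vanish
  have hcoef : ∀ j ∈ Finset.range (n+1), ∀ k ∈ Finset.range (m+1), s' j k = 0 := by
    intro j hj k hk
    have hzero : tint (fun θ φ => evalP n m s' (tor θ) (tor φ) * conj ((tor θ)^j * (tor φ)^k)) = 0 := by
      have hinner : Set.EqOn (fun θ => ∫ φ in (0:ℝ)..(2*Real.pi),
          evalP n m s' (tor θ) (tor φ) * conj ((tor θ)^j * (tor φ)^k)) (fun _ => (0:ℂ))
          (Set.uIcc (0:ℝ) (2*Real.pi)) := by
        intro θ hθ
        rw [Set.uIcc_of_le Real.two_pi_pos.le] at hθ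
        have hin2 : Set.EqOn (fun φ => evalP n m s' (tor θ) (tor φ) * conj ((tor θ)^j * (tor φ)^k))
            (fun _ => (0:ℂ)) (Set.uIcc (0:ℝ) (2*Real.pi)) := by
          intro φ hφ
          rw [Set.uIcc_of_le Real.two_pi_pos.le] at hφ
          simp [hrealzero θ hθ φ hφ]
        simp only
        rw [intervalIntegral.integral_congr hin2, intervalIntegral.integral_zero]
      show (∫ θ in (0:ℝ)..(2*Real.pi), ∫ φ in (0:ℝ)..(2*Real.pi),
        evalP n m s' (tor θ) (tor φ) * conj ((tor θ)^j * (tor φ)^k)) = 0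
      rw [intervalIntegral.integral_congr hinner, intervalIntegral.integral_zero]
    have hpt : ∀ θ φ : ℝ, evalP n m s' (tor θ) (tor φ) * conj ((tor θ)^j * (tor φ)^k)
        = ∑ j' ∈ Finset.range (n+1), ∑ k' ∈ Finset.range (m+1),
            s' j' k' * (((tor θ)^j' * conj ((tor θ)^j)) * ((tor φ)^k' * conj ((tor φ)^k))) := by
      intro θ φ
      unfold evalP
      rw [Finset.sum_mul]
      refine Finset.sum_congr rfl fun j' _ => ?_
      rw [Finset.sum_mul]
      refine Finset.sum_congr rfl fun k' _ => ?_
      rw [map_mul]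
      ring
    have hcont1 : ∀ j' k' : ℕ, Continuous fun p : ℝ × ℝ =>
        s' j' k' * (((tor p.1)^j' * conj ((tor p.1)^j)) * ((tor p.2)^k' * conj ((tor p.2)^k))) := by
      intro j' k'
      apply continuous_const.mul
      apply Continuous.mul
      · exact ((cont_tor.comp continuous_fst).pow j').mul
          (Complex.continuous_conj.comp ((cont_tor.comp continuous_fst).pow j))
      · exact ((cont_tor.comp continuous_snd).pow k').mul
          (Complex.continuous_conj.comp ((cont_tor.comp continuous_snd).pow k))
    have heach : ∀ j' k' : ℕ, tint (fun θ φ =>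
          s' j' k' * (((tor θ)^j' * conj ((tor θ)^j)) * ((tor φ)^k' * conj ((tor φ)^k))))
        = s' j' k' * ((if j' = j then ((2*Real.pi:ℝ):ℂ) else 0) *
            (if k' = k then ((2*Real.pi:ℝ):ℂ) else 0)) := by
      intro j' k'
      rw [tint_const_mul, tint_sep, char_integral, char_integral]
    have hexp : tint (fun θ φ => evalP n m s' (tor θ) (tor φ) * conj ((tor θ)^j * (tor φ)^k))
        = s' j k * (((2*Real.pi:ℝ):ℂ) * ((2*Real.pi:ℝ):ℂ)) := by
      rw [tint_congr hpt, tint_sum _ _ (fun j' _ => continuous_finset_sum _ fun k' _ => hcont1 j' k')]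
      rw [Finset.sum_congr rfl (fun j' _ => tint_sum _ _ (fun k' _ => hcont1 j' k'))]
      rw [Finset.sum_congr rfl (fun j' _ => Finset.sum_congr rfl (fun k' _ => heach j' k'))]
      rw [Finset.sum_eq_single j]
      · rw [Finset.sum_eq_single k]
        · rw [if_pos rfl, if_pos rfl]
        · intro k' _ hk'; rw [if_neg hk']; ring
        · intro hk'; exact absurd hk hk'
      · intro j' _ hj'
        apply Finset.sum_eq_zero; intro k' _
        rw [if_neg hj']; ring
      · intro hj'; exact absurd hj hj'
    rw [hexp] at hzero
    have h2pine : ((2*Real.pi:ℝ):ℂ) ≠ 0 := Complex.ofReal_ne_zero.mpr (by positivity)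
    rcases mul_eq_zero.mp hzero with h | h
    · exact h
    · exact absurd h (mul_ne_zero h2pine h2pine)
  have hall : ∀ z w : ℂ, evalP n m b z w = (lam:ℂ) * (evalP n m a z w / (c:ℂ)) := by
    intro z w
    have h0 : evalP n m s' z w = 0 := by
      unfold evalP
      apply Finset.sum_eq_zero; intro j hj
      apply Finset.sum_eq_zero; intro k hk
      rw [hcoef j hj k hk]; ring
    have h1 := hSlin z w
    rw [h0, evalP_div] at h1
    linear_combination -h1
  have hlam1 : lam = 1 := by
    have hpt : ∀ θ φ : ℝ, ‖evalP n m b (tor θ) (tor φ)‖^2 *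
        (c^2 / ‖evalP n m a (tor θ) (tor φ)‖^2) = lam^2 := by
      intro θ φ
      rw [hall, norm_mul, norm_div, Complex.norm_real, Complex.norm_real, Real.norm_eq_abs, Real.norm_eq_abs,
        abs_of_pos hc, abs_of_pos hlampos]
      field_simp [habsne θ φ]
    have hN := hNormb
    unfold NormOneCond at hN
    have h1 : ∀ θ:ℝ, (∫ φ in (0:ℝ)..(2*Real.pi),
        ‖evalP n m b (tor θ) (tor φ)‖^2 *
          (c^2 / ‖evalP n m a (tor θ) (tor φ)‖^2)) = 2*Real.pi * lam^2 := by
      intro θ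
      rw [intervalIntegral.integral_congr (g := fun _ => lam^2) (fun φ _ => hpt θ φ),
        intervalIntegral.integral_const]
      simp [mul_comm]
    rw [intervalIntegral.integral_congr (g := fun _ => 2*Real.pi*lam^2) (fun θ _ => h1 θ),
      intervalIntegral.integral_const] at hN
    have hl2 : lam^2 = 1 := by
      rw [smul_eq_mul, sub_zero] at hN
      have hπ : Real.pi ≠ 0 := Real.pi_ne_zero
      field_simp at hN
      nlinarith [hN, Real.pi_pos, mul_pos Real.pi_pos Real.pi_pos]
    nlinarith [hlampos, hl2]
  intro z w
  rw [hall z w, hlam1]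
  push_cast
  ring

end BS

/-- For stable `q` with `q(0,0) > 0` and Bernstein–Szegő measure `μ` with normalizing
constant `c`, the polynomial `q/c` is the unique `p` of bidegree `(n,m)` with
`p ⊥_μ z^j w^k` for `(j,k) ≠ (0,0)`, `p(0,0) > 0`, and `‖p‖_μ = 1`. -/
theorem stmt_19 (n m : ℕ) (a : ℕ → ℕ → ℂ)
    (hstable : ∀ z w : ℂ, ‖z‖ ≤ 1 → ‖w‖ ≤ 1 → evalP n m a z w ≠ 0)
    (hpos : PosAtZero n m a)
    (c : ℝ) (hc : 0 < c)
    (hprob : (1 / (2 * Real.pi) ^ 2) *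
        (∫ θ in (0 : ℝ)..(2 * Real.pi), ∫ φ in (0 : ℝ)..(2 * Real.pi),
          c ^ 2 / ‖evalP n m a (tor θ) (tor φ)‖ ^ 2) = 1) :
    (OrthCond n m a (fun j k => a j k / (c : ℂ)) c ∧
      PosAtZero n m (fun j k => a j k / (c : ℂ)) ∧
      NormOneCond n m a (fun j k => a j k / (c : ℂ)) c) ∧
    (∀ b : ℕ → ℕ → ℂ, OrthCond n m a b c → PosAtZero n m b → NormOneCond n m a b c →
      ∀ z w : ℂ, evalP n m b z w = evalP n m a z w / (c : ℂ)) := by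
  have hQne : ∀ θ φ : ℝ, evalP n m a (tor θ) (tor φ) ≠ 0 :=
    fun θ φ => hstable _ _ (le_of_eq (BS.abs_tor θ)) (le_of_eq (BS.abs_tor φ))
  have habsne : ∀ θ φ : ℝ, ‖evalP n m a (tor θ) (tor φ)‖ ≠ 0 :=
    fun θ φ => norm_ne_zero_iff.mpr (hQne θ φ)
  have hcC : (c:ℂ) ≠ 0 := Complex.ofReal_ne_zero.mpr hc.ne'
  have horthA : ∀ j k : ℕ, j ≤ n → k ≤ m → (j, k) ≠ (0, 0) →
      BS.tint (fun θ φ => evalP n m (fun j k => a j k / (c:ℂ)) (tor θ) (tor φ) *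
        conj ((tor θ)^j * (tor φ)^k) *
        ((c:ℂ)^2 / ((‖evalP n m a (tor θ) (tor φ)‖ : ℝ):ℂ)^2)) = 0 := by
    intro j k hj hk hjk
    have h00 : (0:ℂ)^j * (0:ℂ)^k = 0 := by
      have hjk2 : j ≠ 0 ∨ k ≠ 0 := by
        by_contra h; push_neg at h; exact hjk (by simp [h.1, h.2])
      rcases hjk2 with h | h
      · simp [zero_pow h]
      · simp [zero_pow h]
    have hdm := BS.double_mean_value n m a hstable (P := fun z w => z^j * w^k)
      (fun z => (differentiable_pow k).const_mul _) ((differentiable_pow j).mul_const _)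
    calc BS.tint (fun θ φ => evalP n m (fun j k => a j k / (c:ℂ)) (tor θ) (tor φ) *
          conj ((tor θ)^j * (tor φ)^k) *
          ((c:ℂ)^2 / ((‖evalP n m a (tor θ) (tor φ)‖ : ℝ):ℂ)^2))
        = BS.tint (fun θ φ =>
            conj ((c:ℂ) * ((tor θ)^j * (tor φ)^k) / evalP n m a (tor θ) (tor φ))) :=
          BS.tint_congr (fun θ φ => by
            rw [BS.evalP_div]; exact BS.alg1 _ _ c (hQne θ φ) hc.ne')
      _ = conj (BS.tint (fun θ φ =>
            (c:ℂ) * (((tor θ)^j * (tor φ)^k) / evalP n m a (tor θ) (tor φ)))) := by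
          rw [← BS.tint_conj]
          exact BS.tint_congr (fun θ φ => by rw [mul_div_assoc])
      _ = 0 := by
          rw [BS.tint_const_mul,
            show BS.tint (fun θ φ => ((tor θ)^j * (tor φ)^k) / evalP n m a (tor θ) (tor φ))
              = (2*Real.pi)^2 * ((0:ℂ)^j*(0:ℂ)^k / evalP n m a 0 0) from hdm, h00]
          simp
  refine ⟨⟨?_, ?_, ?_⟩, ?_⟩
  · intro j k hj hk hjk
    exact mul_eq_zero_of_right _ (horthA j k hj hk hjk)
  · have hx : evalP n m (fun j k => a j k / (c:ℂ)) 0 0 = ((1/c:ℝ):ℂ) * evalP n m a 0 0 := by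
      rw [BS.evalP_div]; push_cast; ring
    constructor
    · rw [hx]
      have hre : ((((1/c:ℝ)):ℂ) * evalP n m a 0 0).re = (1/c) * (evalP n m a 0 0).re := by
        simp [Complex.mul_re]
      rw [hre]
      exact mul_pos (by positivity) hpos.1
    · rw [hx]
      simp [Complex.mul_im, hpos.2]
  · unfold NormOneCond
    have hpt : ∀ θ φ : ℝ, ‖evalP n m (fun j k => a j k / (c:ℂ)) (tor θ) (tor φ)‖^2 *
        (c^2 / ‖evalP n m a (tor θ) (tor φ)‖^2) = 1 := by
      intro θ φ
      rw [BS.evalP_div, norm_div, Complex.norm_real, Real.norm_eq_abs, abs_of_pos hc]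
      field_simp [habsne θ φ]
    have h1 : ∀ θ:ℝ, (∫ φ in (0:ℝ)..(2*Real.pi),
        ‖evalP n m (fun j k => a j k / (c:ℂ)) (tor θ) (tor φ)‖^2 *
          (c^2 / ‖evalP n m a (tor θ) (tor φ)‖^2)) = 2*Real.pi := by
      intro θ
      rw [intervalIntegral.integral_congr (g := fun _ => (1:ℝ)) (fun φ _ => hpt θ φ),
        intervalIntegral.integral_const]
      simp
    rw [intervalIntegral.integral_congr (g := fun _ => 2*Real.pi) (fun θ _ => h1 θ),
      intervalIntegral.integral_const]
    have hπ : Real.pi ≠ 0 := Real.pi_ne_zero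
    rw [smul_eq_mul, sub_zero]
    field_simp
  · exact BS.unique n m a hstable hpos c hc horthA
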